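/- For t, s, r ∈ [0,1] and ζ ∉ Spec(𝒩_t + V_t) ∪ Spec(𝒩_s + V_s), the resolvents R_t(ζ) := (𝒩_t + V_t − ζ)⁻¹ satisfy R_t(ζ) − R_s(ζ) = R_t(ζ)(V_s − V_t)R_s(ζ) + τ (T_r R_t(ζ̄))* 𝒥 T_r R_s(ζ), and moreover R_t(ζ) − R_s(ζ) = R_t(ζ)(V_s − V_t)R_s(ζ) + τ (T_t R_t(ζ̄))* (((P_t − P_s)J) ⊕ (−(Q_t − Q_s)J)) T_s R_s(ζ) + τ (T_t R_t(ζ̄))* 𝒥 (T_t − T_s) R_s(ζ). -/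

import Mathlib

noncomputable section

open Function Set

namespace CSO

local notation "⟪" x ", " y "⟫" => (inner ℂ x y : ℂ)

/-- The ℓ²-direct sum `E ⊕ E`. -/
abbrev Sq (E : Type*) : Type _ := WithLp 2 (E × E)

section Pieces

variable {E F E' F' : Type*}
  [NormedAddCommGroup E] [InnerProductSpace ℂ E]
  [NormedAddCommGroup F] [InnerProductSpace ℂ F]
  [NormedAddCommGroup E'] [InnerProductSpace ℂ E']
  [NormedAddCommGroup F'] [InnerProductSpace ℂ F']

/-- Pairing map into the ℓ²-direct sum. -/
def mk2 (x y : E) : Sq E := (WithLp.equiv 2 (E × E)).symm (x, y)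

/-- First component. -/
def c1 (u : Sq E) : E := (WithLp.equiv 2 (E × E) u).1

/-- Second component. -/
def c2 (u : Sq E) : E := (WithLp.equiv 2 (E × E) u).2

/-- Transport of a product of continuous linear maps to the ℓ²-products. -/
def pm (A : E →L[ℂ] E') (B : F →L[ℂ] F') :
    WithLp 2 (E × F) →L[ℂ] WithLp 2 (E' × F') :=
  (((WithLp.prodContinuousLinearEquiv 2 ℂ E' F').symm :
      (E' × F') →L[ℂ] WithLp 2 (E' × F')).comp (A.prodMap B)).comp
    ((WithLp.prodContinuousLinearEquiv 2 ℂ E F :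
      WithLp 2 (E × F) ≃L[ℂ] (E × F)) : WithLp 2 (E × F) →L[ℂ] E × F)

/-- The continuous linear map `x ↦ (A x, B x)` into an ℓ²-direct sum. -/
def mk2L (A B : E →L[ℂ] F) : E →L[ℂ] Sq F :=
  (((WithLp.prodContinuousLinearEquiv 2 ℂ F F).symm :
      (F × F) →L[ℂ] Sq F)).comp (A.prod B)

/-- First component as a continuous linear map. -/
def c1L : Sq E →L[ℂ] E :=
  (ContinuousLinearMap.fst ℂ E E).comp
    ((WithLp.prodContinuousLinearEquiv 2 ℂ E E :
      Sq E ≃L[ℂ] (E × E)) : Sq E →L[ℂ] E × E)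

/-- Second component as a continuous linear map. -/
def c2L : Sq E →L[ℂ] E :=
  (ContinuousLinearMap.snd ℂ E E).comp
    ((WithLp.prodContinuousLinearEquiv 2 ℂ E E :
      Sq E ≃L[ℂ] (E × E)) : Sq E →L[ℂ] E × E)

/-- The involution `τ (u₁, u₂) = (u₂, u₁)`. -/
def swapL (E : Type*) [NormedAddCommGroup E] [InnerProductSpace ℂ E] :
    Sq E →L[ℂ] Sq E := mk2L c2L c1L

/-- The standard symplectic matrix `J (f₁, f₂) = (f₂, -f₁)`. -/
def Jm (E : Type*) [NormedAddCommGroup E] [InnerProductSpace ℂ E] :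
    Sq E →L[ℂ] Sq E := mk2L c2L (-c1L)

/-- The symplectic matrix `𝒥 = J ⊕ (-J)` on `𝔥⁴`. -/
def calJ (E : Type*) [NormedAddCommGroup E] [InnerProductSpace ℂ E] :
    Sq (Sq E) →L[ℂ] Sq (Sq E) := pm (Jm E) (-(Jm E))

/-- The symplectic form `ω(f, g) = ⟨f₂, g₁⟩ - ⟨f₁, g₂⟩` on `𝔥²`. -/
def om (f g : Sq E) : ℂ := ⟪c2 f, c1 g⟫ - ⟪c1 f, c2 g⟫

/-- The symplectic form
`Ω(f, g) = ⟨f₂,g₁⟩ - ⟨f₁,g₂⟩ - ⟨f₄,g₃⟩ + ⟨f₃,g₄⟩` on `𝔥⁴`. -/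
def Om (f g : Sq (Sq E)) : ℂ := om (c1 f) (c1 g) - om (c2 f) (c2 g)

/-- Orthogonal projection predicate. -/
def IsOrthProj [CompleteSpace E] (P : E →L[ℂ] E) : Prop :=
  P.comp P = P ∧ IsSelfAdjoint P

/-- The range of `P` is a Lagrangian subspace of `(𝔥², ω)`. -/
def IsLagrangianRange (P : Sq E →L[ℂ] Sq E) : Prop :=
  ∀ f, f ∈ Set.range P ↔ ∀ g ∈ Set.range P, om f g = 0

end Pieces

/-- The core data: a closed densely defined symmetric operator `A` with equal finite
deficiency indices `dim 𝔥`, whose adjoint `A*` has domain the Hilbert space `Hp = H₊`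
(with the graph inner product), realized through the embedding `e : H₊ → H` and the
bounded operator `As = A* : H₊ → H`. -/
structure Core (H 𝔥 Hp : Type*) [NormedAddCommGroup H] [InnerProductSpace ℂ H]
    [NormedAddCommGroup 𝔥] [InnerProductSpace ℂ 𝔥]
    [NormedAddCommGroup Hp] [InnerProductSpace ℂ Hp] where
  e : Hp →L[ℂ] H
  As : Hp →L[ℂ] H
  e_inj : Function.Injective e
  graph_inner : ∀ u v : Hp, ⟪u, v⟫ = ⟪e u, e v⟫ + ⟪As u, As v⟫
  domA : Submodule ℂ Hp
  dense_dom : Dense (e '' (domA : Set Hp))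
  adjoint_iff : ∀ v w : H,
      (∃ p : Hp, e p = v ∧ As p = w) ↔ ∀ u ∈ domA, ⟪As u, v⟫ = ⟪e u, w⟫
  closed_graph : IsClosed {q : H × H | ∃ p ∈ domA, e p = q.1 ∧ As p = q.2}
  defect_m : Module.finrank ℂ
      (LinearMap.ker (As.toLinearMap - Complex.I • e.toLinearMap)) = Module.finrank ℂ 𝔥
  defect_p : Module.finrank ℂ
      (LinearMap.ker (As.toLinearMap + Complex.I • e.toLinearMap)) = Module.finrank ℂ 𝔥

variable {H 𝔥 Hp : Type*}
  [NormedAddCommGroup H] [InnerProductSpace ℂ H]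
  [NormedAddCommGroup 𝔥] [InnerProductSpace ℂ 𝔥]
  [NormedAddCommGroup Hp] [InnerProductSpace ℂ Hp]

/-- The embedding `H₊² → H²`. -/
def Core.emb2 (C : Core H 𝔥 Hp) : Sq Hp →L[ℂ] Sq H := pm C.e C.e

/-- The action `(u₁,u₂) ↦ (-A* u₂, A* u₁)` (the common formula for `N` and its
extensions `𝒩`). -/
def Core.Nmax (C : Core H 𝔥 Hp) : Sq Hp →L[ℂ] Sq H :=
  mk2L ((-C.As).comp c2L) (C.As.comp c1L)

/-- The action of `N* : (u₁,u₂) ↦ (A* u₂, -A* u₁)`. -/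
def Core.NstarOp (C : Core H 𝔥 Hp) : Sq Hp →L[ℂ] Sq H := -C.Nmax

/-- The action of `(τN)* : (u₁,u₂) ↦ (A* u₁, -A* u₂)`. -/
def Core.tauNstarOp (C : Core H 𝔥 Hp) : Sq Hp →L[ℂ] Sq H :=
  mk2L (C.As.comp c1L) ((-C.As).comp c2L)

/-- Trace operator (boundary triplet map) for `A*`: bounded, surjective, and
satisfying the abstract Green identity. -/
structure IsTrace (C : Core H 𝔥 Hp) (tr : Hp →L[ℂ] Sq 𝔥) : Prop where
  surj : Function.Surjective tr
  green : ∀ u v : Hp, ⟪C.As u, C.e v⟫ - ⟪C.e u, C.As v⟫ = om (tr u) (tr v)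

/-- The doubled trace operator `T = tr ⊕ tr : H₊² → 𝔥⁴`. -/
def Top (tr : Hp →L[ℂ] Sq 𝔥) : Sq Hp →L[ℂ] Sq (Sq 𝔥) := pm tr tr

/-- `dom ⊆ H₊` is the domain of a self-adjoint extension of `A` (the extension being
the restriction of `A*` to `dom`). -/
structure IsSAExt (C : Core H 𝔥 Hp) (dom : Submodule ℂ Hp) : Prop where
  le : C.domA ≤ dom
  sa : ∀ v w : H,
      (∃ p ∈ dom, C.e p = v ∧ C.As p = w) ↔ ∀ u ∈ dom, ⟪C.As u, v⟫ = ⟪C.e u, w⟫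

/-- The bounded potential `V(u,v) = (-G v, F u)` on `H²`. -/
def Vop [CompleteSpace H] (F G : H →L[ℂ] H) : Sq H →L[ℂ] Sq H :=
  mk2L ((-G).comp c2L) (F.comp c1L)

/-- The adjoint potential `V*(u,v) = (F v, -G u)` on `H²`. -/
def VopStar [CompleteSpace H] (F G : H →L[ℂ] H) : Sq H →L[ℂ] Sq H :=
  mk2L (F.comp c2L) ((-G).comp c1L)

/-- `p ∈ dom(𝒜) × dom(ℬ)` and `(𝒩 + V - ζ) p = x`. -/
def ResSol (C : Core H 𝔥 Hp) [CompleteSpace H] (dU dV : Submodule ℂ Hp)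
    (V : Sq H →L[ℂ] Sq H) (ζ : ℂ) (p : Sq Hp) (x : Sq H) : Prop :=
  c1 p ∈ dU ∧ c2 p ∈ dV ∧ C.Nmax p + V (C.emb2 p) - ζ • C.emb2 p = x

/-- `R = (𝒩 + V - ζ)⁻¹`, viewed as a bounded operator from `H²` to `H₊²`. -/
def IsResS (C : Core H 𝔥 Hp) [CompleteSpace H] (dU dV : Submodule ℂ Hp)
    (V : Sq H →L[ℂ] Sq H) (ζ : ℂ) (R : Sq H →L[ℂ] Sq Hp) : Prop :=
  (∀ x, ResSol C dU dV V ζ (R x) x) ∧ ∀ p x, ResSol C dU dV V ζ p x → R x = p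

/-- `R = (𝒩 + V - ζ)⁻¹ ∈ B(H²)`. -/
def IsResW (C : Core H 𝔥 Hp) [CompleteSpace H] (dU dV : Submodule ℂ Hp)
    (V : Sq H →L[ℂ] Sq H) (ζ : ℂ) (R : Sq H →L[ℂ] Sq H) : Prop :=
  (∀ x, ∃ p, ResSol C dU dV V ζ p x ∧ C.emb2 p = R x) ∧
    ∀ p x, ResSol C dU dV V ζ p x → R x = C.emb2 p

/-- The spectrum of `𝒩 + V` (complement of the resolvent set). -/
def specSet (C : Core H 𝔥 Hp) [CompleteSpace H] (dU dV : Submodule ℂ Hp)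
    (V : Sq H →L[ℂ] Sq H) : Set ℂ :=
  {ζ | ¬ ∃ R : Sq H →L[ℂ] Sq Hp, IsResS C dU dV V ζ R}

/-- The resolvent `(𝒩 + V - ζ)⁻¹ : H² → H₊²` (defined by choice; `0` off the
resolvent set). -/
def resolventS (C : Core H 𝔥 Hp) [CompleteSpace H] (dU dV : Submodule ℂ Hp)
    (V : Sq H →L[ℂ] Sq H) (ζ : ℂ) : Sq H →L[ℂ] Sq Hp :=
  open Classical in
  if h : ∃ R, IsResS C dU dV V ζ R then h.choose else 0

/-- The resolvent `(𝒩 + V - ζ)⁻¹ ∈ B(H²)`. -/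
def resolventW (C : Core H 𝔥 Hp) [CompleteSpace H] (dU dV : Submodule ℂ Hp)
    (V : Sq H →L[ℂ] Sq H) (ζ : ℂ) : Sq H →L[ℂ] Sq H :=
  C.emb2.comp (resolventS C dU dV V ζ)

/-- `ζ` is an eigenvalue of `𝒩 + V`. -/
def IsEig (C : Core H 𝔥 Hp) [CompleteSpace H] (dU dV : Submodule ℂ Hp)
    (V : Sq H →L[ℂ] Sq H) (ζ : ℂ) : Prop :=
  ∃ p : Sq Hp, p ≠ 0 ∧ c1 p ∈ dU ∧ c2 p ∈ dV ∧
    C.Nmax p + V (C.emb2 p) = ζ • C.emb2 p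

/-- The one-parameter families of Hypothesis 3.1: trace operators, orthogonal
projections with Lagrangian ranges, self-adjoint extensions compatible with the
projections, and bounded self-adjoint perturbations. -/
structure IsFamily [CompleteSpace H] [CompleteSpace Hp] [FiniteDimensional ℂ 𝔥]
    (C : Core H 𝔥 Hp)
    (tr : ℝ → Hp →L[ℂ] Sq 𝔥) (P Q : ℝ → Sq 𝔥 →L[ℂ] Sq 𝔥)
    (dU dV : ℝ → Submodule ℂ Hp) (F G : ℝ → H →L[ℂ] H) : Prop where
  htr : ∀ t ∈ Icc (0:ℝ) 1, IsTrace C (tr t)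
  hP : ∀ t ∈ Icc (0:ℝ) 1, IsOrthProj (P t) ∧ IsLagrangianRange (P t)
  hQ : ∀ t ∈ Icc (0:ℝ) 1, IsOrthProj (Q t) ∧ IsLagrangianRange (Q t)
  hU : ∀ t ∈ Icc (0:ℝ) 1, IsSAExt C (dU t)
  hV : ∀ t ∈ Icc (0:ℝ) 1, IsSAExt C (dV t)
  htrU : ∀ t ∈ Icc (0:ℝ) 1, tr t '' ((dU t : Set Hp)) = Set.range (P t)
  htrV : ∀ t ∈ Icc (0:ℝ) 1, tr t '' ((dV t : Set Hp)) = Set.range (Q t)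
  hF : ∀ t ∈ Icc (0:ℝ) 1, IsSelfAdjoint (F t)
  hG : ∀ t ∈ Icc (0:ℝ) 1, IsSelfAdjoint (G t)

/-- Hypothesis 3.3: there is a point `z` in the resolvent set of `𝒩_t + V_t`
for all `t` near `t₀`. -/
def HypZ [CompleteSpace H] (C : Core H 𝔥 Hp) (dU dV : ℝ → Submodule ℂ Hp)
    (F G : ℝ → H →L[ℂ] H) (t₀ : ℝ) (z : ℂ) : Prop :=
  ∃ δ > 0, ∀ t : ℝ, |t - t₀| < δ →
    ∃ R, IsResS C (dU t) (dV t) (Vop (F t) (G t)) z R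

set_option linter.unusedSectionVars false

section AuxBasic

variable {E F E' F' : Type*}
  [NormedAddCommGroup E] [InnerProductSpace ℂ E]
  [NormedAddCommGroup F] [InnerProductSpace ℂ F]
  [NormedAddCommGroup E'] [InnerProductSpace ℂ E']
  [NormedAddCommGroup F'] [InnerProductSpace ℂ F']

@[simp] lemma fst_eq_c1 (u : Sq E) : u.ofLp.1 = c1 u := rfl
@[simp] lemma snd_eq_c2 (u : Sq E) : u.ofLp.2 = c2 u := rfl
@[simp] lemma wfst_eq_c1 (u : Sq E) : WithLp.fst u = c1 u := rfl
@[simp] lemma wsnd_eq_c2 (u : Sq E) : WithLp.snd u = c2 u := rfl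
@[simp] lemma c1_mk2 (x y : E) : c1 (mk2 x y) = x := rfl
@[simp] lemma c2_mk2 (x y : E) : c2 (mk2 x y) = y := rfl
lemma sq_ext {u v : Sq E} (h1 : c1 u = c1 v) (h2 : c2 u = c2 v) : u = v := by
  have : (WithLp.equiv 2 (E × E)) u = (WithLp.equiv 2 (E × E)) v := Prod.ext h1 h2
  exact (WithLp.equiv 2 (E × E)).injective this

@[simp] lemma c1_add (u v : Sq E) : c1 (u + v) = c1 u + c1 v := rfl
@[simp] lemma c2_add (u v : Sq E) : c2 (u + v) = c2 u + c2 v := rfl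
@[simp] lemma c1_sub (u v : Sq E) : c1 (u - v) = c1 u - c1 v := rfl
@[simp] lemma c2_sub (u v : Sq E) : c2 (u - v) = c2 u - c2 v := rfl
@[simp] lemma c1_neg (u : Sq E) : c1 (-u) = -(c1 u) := rfl
@[simp] lemma c2_neg (u : Sq E) : c2 (-u) = -(c2 u) := rfl
@[simp] lemma c1_smul (a : ℂ) (u : Sq E) : c1 (a • u) = a • c1 u := rfl
@[simp] lemma c2_smul (a : ℂ) (u : Sq E) : c2 (a • u) = a • c2 u := rfl
@[simp] lemma c1_zero : c1 (0 : Sq E) = 0 := rfl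
@[simp] lemma c2_zero : c2 (0 : Sq E) = 0 := rfl

lemma inner_sq (u v : Sq E) : ⟪u, v⟫ = ⟪c1 u, c1 v⟫ + ⟪c2 u, c2 v⟫ := rfl

@[simp] lemma c1L_apply (u : Sq E) : (c1L : Sq E →L[ℂ] E) u = c1 u := rfl
@[simp] lemma c2L_apply (u : Sq E) : (c2L : Sq E →L[ℂ] E) u = c2 u := rfl
@[simp] lemma mk2L_apply (A B : E →L[ℂ] F) (x : E) : mk2L A B x = mk2 (A x) (B x) := rfl
@[simp] lemma pm_apply_c1 (A B : E →L[ℂ] E') (u : Sq E) : c1 (pm A B u) = A (c1 u) := rfl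
@[simp] lemma pm_apply_c2 (A B : E →L[ℂ] E') (u : Sq E) : c2 (pm A B u) = B (c2 u) := rfl
lemma pm_apply (A B : E →L[ℂ] E') (u : Sq E) : pm A B u = mk2 (A (c1 u)) (B (c2 u)) := rfl
@[simp] lemma swapL_apply (u : Sq E) : swapL E u = mk2 (c2 u) (c1 u) := rfl
@[simp] lemma Jm_apply (u : Sq E) : Jm E u = mk2 (c2 u) (-(c1 u)) := rfl
@[simp] lemma swapL_swapL (u : Sq E) : swapL E (swapL E u) = u := by
  apply sq_ext <;> simp

lemma inner_swapL (u v : Sq E) : ⟪swapL E u, swapL E v⟫ = ⟪u, v⟫ := by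
  simp [inner_sq]; ring

lemma inner_swapL_left (u v : Sq E) : ⟪swapL E u, v⟫ = ⟪u, swapL E v⟫ := by
  simp [inner_sq]; ring

lemma inner_Jm (f g : Sq E) : ⟪Jm E f, g⟫ = om f g := by
  simp [inner_sq, om]; ring

lemma inner_calJ (f g : Sq (Sq E)) : ⟪calJ E f, g⟫ = om (c1 f) (c1 g) - om (c2 f) (c2 g) := by
  have h : calJ E f = mk2 (Jm E (c1 f)) (-(Jm E (c2 f))) := rfl
  rw [h, inner_sq, c1_mk2, c2_mk2, inner_neg_left, inner_Jm, inner_Jm]; ring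

lemma om_sub_left (f g h : Sq E) : om (f - g) h = om f h - om g h := by
  simp [om, inner_sub_left]; ring

end AuxBasic
section AuxMore

variable {E : Type*} [NormedAddCommGroup E] [InnerProductSpace ℂ E]

lemma lagr_vanish {P : Sq E →L[ℂ] Sq E} (hP : IsLagrangianRange P)
    {f g : Sq E} (hf : f ∈ Set.range P) (hg : g ∈ Set.range P) : om f g = 0 :=
  (hP f).mp hf g hg

lemma proj_fix [CompleteSpace E] {P : E →L[ℂ] E} (hP : IsOrthProj P) {g : E}
    (hg : g ∈ Set.range P) : P g = g := by
  obtain ⟨x, rfl⟩ := hg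
  have h := congrArg (fun M : E →L[ℂ] E => M x) hP.1
  simpa using h

lemma sa_inner [CompleteSpace E] {T : E →L[ℂ] E} (hT : IsSelfAdjoint T) (a b : E) :
    ⟪T a, b⟫ = ⟪a, T b⟫ := by
  conv_lhs => rw [← hT.star_eq, ContinuousLinearMap.star_eq_adjoint,
    ContinuousLinearMap.adjoint_inner_left]

end AuxMore

section AuxCore

variable {H 𝔥 Hp : Type*}
  [NormedAddCommGroup H] [InnerProductSpace ℂ H]
  [NormedAddCommGroup 𝔥] [InnerProductSpace ℂ 𝔥]
  [NormedAddCommGroup Hp] [InnerProductSpace ℂ Hp]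

@[simp] lemma Nmax_c1 (C : Core H 𝔥 Hp) (p : Sq Hp) : c1 (C.Nmax p) = -(C.As (c2 p)) := rfl
@[simp] lemma Nmax_c2 (C : Core H 𝔥 Hp) (p : Sq Hp) : c2 (C.Nmax p) = C.As (c1 p) := rfl
@[simp] lemma emb2_c1 (C : Core H 𝔥 Hp) (p : Sq Hp) : c1 (C.emb2 p) = C.e (c1 p) := rfl
@[simp] lemma emb2_c2 (C : Core H 𝔥 Hp) (p : Sq Hp) : c2 (C.emb2 p) = C.e (c2 p) := rfl
@[simp] lemma Top_c1 (tr : Hp →L[ℂ] Sq 𝔥) (p : Sq Hp) : c1 (Top tr p) = tr (c1 p) := rfl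
@[simp] lemma Top_c2 (tr : Hp →L[ℂ] Sq 𝔥) (p : Sq Hp) : c2 (Top tr p) = tr (c2 p) := rfl
@[simp] lemma Vop_c1 [CompleteSpace H] (F G : H →L[ℂ] H) (u : Sq H) :
    c1 (Vop F G u) = -(G (c2 u)) := rfl
@[simp] lemma Vop_c2 [CompleteSpace H] (F G : H →L[ℂ] H) (u : Sq H) :
    c2 (Vop F G u) = F (c1 u) := rfl

lemma emb2_inj (C : Core H 𝔥 Hp) : Function.Injective C.emb2 := by
  intro a b hab
  apply sq_ext
  · exact C.e_inj (congrArg c1 hab)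
  · exact C.e_inj (congrArg c2 hab)

/-- The fundamental Green-type identity for the operator `𝒩 + V - ζ`. -/
lemma green2 [CompleteSpace H] (C : Core H 𝔥 Hp) {tr : Hp →L[ℂ] Sq 𝔥} (htr : IsTrace C tr)
    {F G : H →L[ℂ] H} (hF : IsSelfAdjoint F) (hG : IsSelfAdjoint G)
    (ζ : ℂ) (p q : Sq Hp) :
    ⟪C.Nmax p + Vop F G (C.emb2 p) - ζ • C.emb2 p, C.emb2 (swapL Hp q)⟫
      - ⟪C.emb2 p, swapL H (C.Nmax q + Vop F G (C.emb2 q) - (starRingEnd ℂ) ζ • C.emb2 q)⟫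
      = om (tr (c1 p)) (tr (c1 q)) - om (tr (c2 p)) (tr (c2 q)) := by
  rw [← htr.green (c1 p) (c1 q), ← htr.green (c2 p) (c2 q)]
  simp only [inner_sq, c1_add, c2_add, c1_sub, c2_sub, c1_smul, c2_smul, c1_neg, c2_neg,
    Nmax_c1, Nmax_c2, emb2_c1, emb2_c2, Vop_c1, Vop_c2, swapL_apply, c1_mk2, c2_mk2,
    inner_add_left, inner_sub_left, inner_neg_left, inner_smul_left,
    inner_add_right, inner_sub_right, inner_neg_right, inner_smul_right]
  rw [sa_inner hF (C.e (c1 p)) (C.e (c1 q)), sa_inner hG (C.e (c2 p)) (C.e (c2 q))]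
  ring

end AuxCore
section AuxStar

variable {H 𝔥 Hp : Type*}
  [NormedAddCommGroup H] [InnerProductSpace ℂ H]
  [NormedAddCommGroup 𝔥] [InnerProductSpace ℂ 𝔥]
  [NormedAddCommGroup Hp] [InnerProductSpace ℂ Hp]

lemma ResSol.add' [CompleteSpace H] {C : Core H 𝔥 Hp} {dU dV : Submodule ℂ Hp}
    {V : Sq H →L[ℂ] Sq H} {ζ : ℂ} {p p' : Sq Hp} {x x' : Sq H}
    (h : ResSol C dU dV V ζ p x) (h' : ResSol C dU dV V ζ p' x') :
    ResSol C dU dV V ζ (p + p') (x + x') := by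
  refine ⟨by simpa using dU.add_mem h.1 h'.1, by simpa using dV.add_mem h.2.1 h'.2.1, ?_⟩
  have := congrArg₂ (· + ·) h.2.2 h'.2.2
  simp only [map_add, smul_add] at this ⊢
  rw [← this]; abel

lemma ResSol.smul' [CompleteSpace H] {C : Core H 𝔥 Hp} {dU dV : Submodule ℂ Hp}
    {V : Sq H →L[ℂ] Sq H} {ζ : ℂ} {p : Sq Hp} {x : Sq H} (a : ℂ)
    (h : ResSol C dU dV V ζ p x) :
    ResSol C dU dV V ζ (a • p) (a • x) := by
  refine ⟨by simpa using dU.smul_mem a h.1, by simpa using dV.smul_mem a h.2.1, ?_⟩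
  have := congrArg (a • ·) h.2.2
  simp only [map_smul, smul_sub, smul_add] at this ⊢
  rw [← this]
  rw [smul_comm a ζ]

/-- The key "star identity": if `R` is the resolvent at `ζ` and `q` solves the problem at
`conj ζ` with data `w`, then `⟪R x, τ w⟫ = ⟪x, τ q⟫`. -/
lemma star_identity [CompleteSpace H] (C : Core H 𝔥 Hp)
    {tr : Hp →L[ℂ] Sq 𝔥} (htr : IsTrace C tr)
    {P Q : Sq 𝔥 →L[ℂ] Sq 𝔥} (hPl : IsLagrangianRange P) (hQl : IsLagrangianRange Q)
    {dU dV : Submodule ℂ Hp}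
    (htrU : tr '' (dU : Set Hp) = Set.range P) (htrV : tr '' (dV : Set Hp) = Set.range Q)
    {F G : H →L[ℂ] H} (hF : IsSelfAdjoint F) (hG : IsSelfAdjoint G)
    {ζ : ℂ} {R : Sq H →L[ℂ] Sq Hp} (hR : IsResS C dU dV (Vop F G) ζ R)
    {q : Sq Hp} {w : Sq H} (hq : ResSol C dU dV (Vop F G) ((starRingEnd ℂ) ζ) q w)
    (x : Sq H) :
    ⟪C.emb2 (R x), swapL H w⟫ = ⟪x, C.emb2 (swapL Hp q)⟫ := by
  obtain ⟨h1, h2, h3⟩ := hR.1 x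
  obtain ⟨hq1, hq2, hq3⟩ := hq
  have hg := green2 C htr hF hG ζ (R x) q
  rw [h3, hq3] at hg
  have z1 : om (tr (c1 (R x))) (tr (c1 q)) = 0 := by
    refine lagr_vanish hPl ?_ ?_
    · rw [← htrU]; exact Set.mem_image_of_mem _ h1
    · rw [← htrU]; exact Set.mem_image_of_mem _ hq1
  have z2 : om (tr (c2 (R x))) (tr (c2 q)) = 0 := by
    refine lagr_vanish hQl ?_ ?_
    · rw [← htrV]; exact Set.mem_image_of_mem _ h2
    · rw [← htrV]; exact Set.mem_image_of_mem _ hq2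
  rw [z1, z2, sub_zero] at hg
  exact (sub_eq_zero.mp hg).symm

lemma ressol_emb_eq [CompleteSpace H] [CompleteSpace Hp] (C : Core H 𝔥 Hp)
    {tr : Hp →L[ℂ] Sq 𝔥} (htr : IsTrace C tr)
    {P Q : Sq 𝔥 →L[ℂ] Sq 𝔥} (hPl : IsLagrangianRange P) (hQl : IsLagrangianRange Q)
    {dU dV : Submodule ℂ Hp}
    (htrU : tr '' (dU : Set Hp) = Set.range P) (htrV : tr '' (dV : Set Hp) = Set.range Q)
    {F G : H →L[ℂ] H} (hF : IsSelfAdjoint F) (hG : IsSelfAdjoint G)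
    {ζ : ℂ} {R : Sq H →L[ℂ] Sq Hp} (hR : IsResS C dU dV (Vop F G) ζ R)
    {q : Sq Hp} {w : Sq H} (hq : ResSol C dU dV (Vop F G) ((starRingEnd ℂ) ζ) q w) :
    C.emb2 q =
      swapL H (ContinuousLinearMap.adjoint (C.emb2.comp R) (swapL H w)) := by
  apply ext_inner_left ℂ
  intro x
  rw [← inner_swapL_left, ContinuousLinearMap.adjoint_inner_right,
    ContinuousLinearMap.comp_apply,
    star_identity C htr hPl hQl htrU htrV hF hG hR hq (swapL H x),
    inner_swapL_left]
  exact congrArg (inner ℂ x) (by apply sq_ext <;> simp)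

end AuxStar
section AuxExists

variable {H 𝔥 Hp : Type*}
  [NormedAddCommGroup H] [InnerProductSpace ℂ H]
  [NormedAddCommGroup 𝔥] [InnerProductSpace ℂ 𝔥]
  [NormedAddCommGroup Hp] [InnerProductSpace ℂ Hp]

lemma sq_norm_sq (E : Type*) [NormedAddCommGroup E] [InnerProductSpace ℂ E] (u : Sq E) :
    ‖u‖ ^ 2 = ‖c1 u‖ ^ 2 + ‖c2 u‖ ^ 2 :=
  WithLp.prod_norm_sq_eq_of_L2 u

lemma hp_norm_sq (C : Core H 𝔥 Hp) (u : Hp) :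
    ‖u‖ ^ 2 = ‖C.e u‖ ^ 2 + ‖C.As u‖ ^ 2 := by
  have h := C.graph_inner u u
  rw [inner_self_eq_norm_sq_to_K, inner_self_eq_norm_sq_to_K, inner_self_eq_norm_sq_to_K] at h
  exact_mod_cast h

lemma sol_norm_sq (C : Core H 𝔥 Hp) (q : Sq Hp) :
    ‖q‖ ^ 2 = ‖C.emb2 q‖ ^ 2 + ‖C.Nmax q‖ ^ 2 := by
  rw [sq_norm_sq, sq_norm_sq, sq_norm_sq, hp_norm_sq C (c1 q), hp_norm_sq C (c2 q)]
  simp only [Nmax_c1, Nmax_c2, emb2_c1, emb2_c2, norm_neg]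
  ring

/-- Existence of solutions at the conjugate spectral parameter. -/
lemma exists_conj_sol [CompleteSpace H] [CompleteSpace Hp] (C : Core H 𝔥 Hp)
    {dU dV : Submodule ℂ Hp} (hU : IsSAExt C dU) (hV : IsSAExt C dV)
    {F G : H →L[ℂ] H} (hF : IsSelfAdjoint F) (hG : IsSelfAdjoint G)
    {ζ : ℂ} {R : Sq H →L[ℂ] Sq Hp} (hR : IsResS C dU dV (Vop F G) ζ R)
    (y : Sq H) :
    ∃ q, ResSol C dU dV (Vop F G) ((starRingEnd ℂ) ζ) q y := by
  set M := ContinuousLinearMap.adjoint (C.emb2.comp R) with hM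
  set z : Sq H := M (swapL H y) with hz
  have key : ∀ p : Sq Hp, c1 p ∈ dU → c2 p ∈ dV →
      ⟪z, C.Nmax p + Vop F G (C.emb2 p) - ζ • C.emb2 p⟫ = ⟪swapL H y, C.emb2 p⟫ := by
    intro p h1 h2
    have hres : ResSol C dU dV (Vop F G) ζ p
        (C.Nmax p + Vop F G (C.emb2 p) - ζ • C.emb2 p) := ⟨h1, h2, rfl⟩
    have hRp := hR.2 p _ hres
    rw [hz, ContinuousLinearMap.adjoint_inner_left, ContinuousLinearMap.comp_apply, hRp]
  -- first component of the solution
  have hq1 : ∃ p ∈ dU, C.e p = c2 z ∧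
      C.As p = c2 y - F (c2 z) + (starRingEnd ℂ) ζ • c1 z := by
    rw [hU.sa]
    intro u hu
    have i := key (mk2 u 0) (by simpa using hu) (by simpa using dV.zero_mem)
    simp only [inner_sq, c1_add, c2_add, c1_sub, c2_sub, c1_smul, c2_smul,
      Nmax_c1, Nmax_c2, emb2_c1, emb2_c2, Vop_c1, Vop_c2, swapL_apply, c1_mk2, c2_mk2,
      map_zero, neg_zero, zero_add, add_zero, smul_zero, sub_zero, zero_sub,
      inner_add_right, inner_sub_right, inner_neg_right, inner_smul_right,
      inner_zero_right, inner_zero_left] at i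
    have i' := congrArg (starRingEnd ℂ) i
    simp only [map_add, map_sub, map_neg, map_mul, inner_conj_symm,
      Complex.conj_conj, RingHom.id_apply] at i'
    simp only [inner_add_right, inner_sub_right, inner_smul_right]
    rw [← sa_inner hF (C.e u) (c2 z)]
    linear_combination i'
  -- second component of the solution
  have hq2 : ∃ p ∈ dV, C.e p = c1 z ∧
      C.As p = -(c1 y) - G (c1 z) - (starRingEnd ℂ) ζ • c2 z := by
    rw [hV.sa]
    intro u hu
    have i := key (mk2 0 u) (by simpa using dU.zero_mem) (by simpa using hu)
    simp only [inner_sq, c1_add, c2_add, c1_sub, c2_sub, c1_smul, c2_smul,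
      Nmax_c1, Nmax_c2, emb2_c1, emb2_c2, Vop_c1, Vop_c2, swapL_apply, c1_mk2, c2_mk2,
      map_zero, neg_zero, zero_add, add_zero, smul_zero, sub_zero, zero_sub,
      inner_add_right, inner_sub_right, inner_neg_right, inner_smul_right,
      inner_zero_right, inner_zero_left] at i
    have i' := congrArg (starRingEnd ℂ) i
    simp only [map_add, map_sub, map_neg, map_mul, inner_conj_symm,
      Complex.conj_conj, RingHom.id_apply] at i'
    simp only [inner_sub_right, inner_smul_right, inner_neg_right]
    rw [← sa_inner hG (C.e u) (c1 z)]
    linear_combination -i'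
  obtain ⟨q1, hq1m, hq1e, hq1a⟩ := hq1
  obtain ⟨q2, hq2m, hq2e, hq2a⟩ := hq2
  refine ⟨mk2 q1 q2, by simpa using hq1m, by simpa using hq2m, ?_⟩
  apply sq_ext
  · simp only [c1_add, c1_sub, c1_smul, Nmax_c1, emb2_c1, Vop_c1, emb2_c2,
      c1_mk2, c2_mk2, hq1e, hq2e, hq1a, hq2a]
    module
  · simp only [c2_add, c2_sub, c2_smul, Nmax_c2, emb2_c2, Vop_c2, emb2_c1,
      c1_mk2, c2_mk2, hq1e, hq2e, hq1a, hq2a]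
    module

end AuxExists
section AuxRc

variable {H 𝔥 Hp : Type*}
  [NormedAddCommGroup H] [InnerProductSpace ℂ H]
  [NormedAddCommGroup 𝔥] [InnerProductSpace ℂ 𝔥]
  [NormedAddCommGroup Hp] [InnerProductSpace ℂ Hp]

/-- Construction of the resolvent at the conjugate spectral parameter. -/
lemma exists_conj_resolvent [CompleteSpace H] [CompleteSpace Hp] (C : Core H 𝔥 Hp)
    {tr : Hp →L[ℂ] Sq 𝔥} (htr : IsTrace C tr)
    {P Q : Sq 𝔥 →L[ℂ] Sq 𝔥} (hPl : IsLagrangianRange P) (hQl : IsLagrangianRange Q)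
    {dU dV : Submodule ℂ Hp} (hU : IsSAExt C dU) (hV : IsSAExt C dV)
    (htrU : tr '' (dU : Set Hp) = Set.range P) (htrV : tr '' (dV : Set Hp) = Set.range Q)
    {F G : H →L[ℂ] H} (hF : IsSelfAdjoint F) (hG : IsSelfAdjoint G)
    {ζ : ℂ} {R : Sq H →L[ℂ] Sq Hp} (hR : IsResS C dU dV (Vop F G) ζ R) :
    ∃ Rc, IsResS C dU dV (Vop F G) ((starRingEnd ℂ) ζ) Rc := by
  choose sol hsol using fun y => exists_conj_sol C hU hV hF hG hR y
  set Mw : Sq H →L[ℂ] Sq H :=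
    (swapL H).comp ((ContinuousLinearMap.adjoint (C.emb2.comp R)).comp (swapL H)) with hMw
  have hemb : ∀ (q : Sq Hp) (w : Sq H),
      ResSol C dU dV (Vop F G) ((starRingEnd ℂ) ζ) q w → C.emb2 q = Mw w := by
    intro q w hq
    rw [hMw]
    exact ressol_emb_eq C htr hPl hQl htrU htrV hF hG hR hq
  have huniq : ∀ (q q' : Sq Hp) (w : Sq H),
      ResSol C dU dV (Vop F G) ((starRingEnd ℂ) ζ) q w →
      ResSol C dU dV (Vop F G) ((starRingEnd ℂ) ζ) q' w → q = q' := by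
    intro q q' w hq hq'
    exact emb2_inj C ((hemb q w hq).trans (hemb q' w hq').symm)
  set Nw : Sq H →L[ℂ] Sq H :=
    ContinuousLinearMap.id ℂ (Sq H) - (Vop F G).comp Mw + (starRingEnd ℂ) ζ • Mw with hNw
  have hNmax : ∀ y, C.Nmax (sol y) = Nw y := by
    intro y
    have he := hemb (sol y) y (hsol y)
    set s := sol y with hs
    have h3 := (hsol y).2.2
    rw [hNw]
    simp only [ContinuousLinearMap.add_apply, ContinuousLinearMap.sub_apply,
      ContinuousLinearMap.smul_apply, ContinuousLinearMap.id_apply,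
      ContinuousLinearMap.coe_comp', Function.comp_apply]
    rw [← he, ← h3]; abel
  set K := Real.sqrt (‖Mw‖ ^ 2 + ‖Nw‖ ^ 2) with hK
  have hbound : ∀ y, ‖sol y‖ ≤ K * ‖y‖ := by
    intro y
    have h1 : ‖sol y‖ ^ 2 ≤ (K * ‖y‖) ^ 2 := by
      rw [sol_norm_sq C (sol y), hemb (sol y) y (hsol y), hNmax y, mul_pow, hK,
        Real.sq_sqrt (by positivity)]
      have m1 := Mw.le_opNorm y
      have m2 := Nw.le_opNorm y
      nlinarith [norm_nonneg (Mw y), norm_nonneg (Nw y), norm_nonneg y,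
        norm_nonneg Mw, norm_nonneg Nw]
    have h2 : (0:ℝ) ≤ K * ‖y‖ := by positivity
    nlinarith [norm_nonneg (sol y)]
  let L0 : Sq H →ₗ[ℂ] Sq Hp :=
    { toFun := sol
      map_add' := fun a b => huniq _ _ _ (hsol (a + b)) ((hsol a).add' (hsol b))
      map_smul' := fun c a => huniq _ _ _ (hsol (c • a)) ((hsol a).smul' c) }
  exact ⟨L0.mkContinuous K hbound, fun y => hsol y,
    fun p x hp => huniq _ _ _ (hsol x) hp⟩

end AuxRc
section AuxProj

variable {E : Type*} [NormedAddCommGroup E] [InnerProductSpace ℂ E] [CompleteSpace E]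

lemma proj_om {Pt Ps : Sq E →L[ℂ] Sq E} (hPt : IsOrthProj Pt) (hPs : IsOrthProj Ps)
    (hPsl : IsLagrangianRange Ps)
    {f g : Sq E} (hf : f ∈ Set.range Ps) (hg : g ∈ Set.range Pt) :
    ⟪(Pt - Ps).comp (Jm E) f, g⟫ = om f g := by
  rw [ContinuousLinearMap.comp_apply, ContinuousLinearMap.sub_apply, inner_sub_left,
    sa_inner hPt.2, sa_inner hPs.2, proj_fix hPt hg, inner_Jm, inner_Jm,
    lagr_vanish hPsl hf ⟨g, rfl⟩, sub_zero]

end AuxProj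
end CSO

namespace CSO

set_option maxHeartbeats 1600000

/-- Lemma 3.2: resolvent difference formulas for the one-parameter
family `𝒩_t + V_t`. -/
theorem statement2
    {H 𝔥 Hp : Type*}
    [NormedAddCommGroup H] [InnerProductSpace ℂ H] [CompleteSpace H]
    [NormedAddCommGroup 𝔥] [InnerProductSpace ℂ 𝔥] [FiniteDimensional ℂ 𝔥]
    [NormedAddCommGroup Hp] [InnerProductSpace ℂ Hp] [CompleteSpace Hp]
    (C : Core H 𝔥 Hp)
    (tr : ℝ → Hp →L[ℂ] Sq 𝔥) (P Q : ℝ → Sq 𝔥 →L[ℂ] Sq 𝔥)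
    (dU dV : ℝ → Submodule ℂ Hp) (F G : ℝ → H →L[ℂ] H)
    (hfam : IsFamily C tr P Q dU dV F G)
    (t s r : ℝ) (ht : t ∈ Icc (0:ℝ) 1) (hs : s ∈ Icc (0:ℝ) 1) (hr : r ∈ Icc (0:ℝ) 1)
    (ζ : ℂ) (Rt Rs : Sq H →L[ℂ] Sq Hp)
    (hRt : IsResS C (dU t) (dV t) (Vop (F t) (G t)) ζ Rt)
    (hRs : IsResS C (dU s) (dV s) (Vop (F s) (G s)) ζ Rs) :
    ∃ Rtc, IsResS C (dU t) (dV t) (Vop (F t) (G t)) ((starRingEnd ℂ) ζ) Rtc ∧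
      -- first formula, with the trace operator `T_r`
      C.emb2.comp Rt - C.emb2.comp Rs =
        ((C.emb2.comp Rt).comp (Vop (F s) (G s) - Vop (F t) (G t))).comp
            (C.emb2.comp Rs)
          + ((swapL H).comp
              (ContinuousLinearMap.adjoint ((Top (tr r)).comp Rtc))).comp
              ((calJ 𝔥).comp ((Top (tr r)).comp Rs)) ∧
      -- second formula
      C.emb2.comp Rt - C.emb2.comp Rs =
        ((C.emb2.comp Rt).comp (Vop (F s) (G s) - Vop (F t) (G t))).comp
            (C.emb2.comp Rs)
          + ((swapL H).comp
              (ContinuousLinearMap.adjoint ((Top (tr t)).comp Rtc))).comp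
              ((pm ((P t - P s).comp (Jm 𝔥)) (-((Q t - Q s).comp (Jm 𝔥)))).comp
                ((Top (tr s)).comp Rs))
          + ((swapL H).comp
              (ContinuousLinearMap.adjoint ((Top (tr t)).comp Rtc))).comp
              ((calJ 𝔥).comp ((Top (tr t) - Top (tr s)).comp Rs)) := by
  have htrt := hfam.htr t ht
  have htrs := hfam.htr s hs
  have htrr := hfam.htr r hr
  have hPt := hfam.hP t ht
  have hPs := hfam.hP s hs
  have hQt := hfam.hQ t ht
  have hQs := hfam.hQ s hs
  obtain ⟨Rtc, hRtc⟩ := exists_conj_resolvent C htrt hPt.2 hQt.2 (hfam.hU t ht)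
    (hfam.hV t ht) (hfam.htrU t ht) (hfam.htrV t ht) (hfam.hF t ht) (hfam.hG t ht) hRt
  refine ⟨Rtc, hRtc, ?_, ?_⟩
  · -- first formula
    ext x
    refine ext_inner_right ℂ fun y => ?_
    set w := swapL H y with hw
    have hsw : swapL H w = y := swapL_swapL y
    simp only [ContinuousLinearMap.sub_apply, ContinuousLinearMap.add_apply,
      ContinuousLinearMap.coe_comp', Function.comp_apply, inner_sub_left, inner_add_left]
    rw [← hsw]
    have e1 := star_identity C htrt hPt.2 hQt.2 (hfam.htrU t ht) (hfam.htrV t ht)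
      (hfam.hF t ht) (hfam.hG t ht) hRt (hRtc.1 w) x
    have e2 := star_identity C htrt hPt.2 hQt.2 (hfam.htrU t ht) (hfam.htrV t ht)
      (hfam.hF t ht) (hfam.hG t ht) hRt (hRtc.1 w)
      (Vop (F s) (G s) (C.emb2 (Rs x)) - Vop (F t) (G t) (C.emb2 (Rs x)))
    have e5 := green2 C htrr (hfam.hF t ht) (hfam.hG t ht) ζ (Rs x) (Rtc w)
    rw [(hRtc.1 w).2.2] at e5
    have e6 : C.Nmax (Rs x) + Vop (F t) (G t) (C.emb2 (Rs x)) - ζ • C.emb2 (Rs x)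
        = x - (Vop (F s) (G s) (C.emb2 (Rs x)) - Vop (F t) (G t) (C.emb2 (Rs x))) := by
      rw [eq_sub_iff_add_eq]
      conv_rhs => rw [← (hRs.1 x).2.2]
      abel
    rw [e6] at e5
    rw [e1, e2, inner_swapL, ContinuousLinearMap.adjoint_inner_left,
      ContinuousLinearMap.coe_comp', Function.comp_apply, inner_calJ]
    simp only [Top_c1, Top_c2]
    simp only [inner_sub_left] at e5 ⊢
    linear_combination e5
  · -- second formula
    ext x
    refine ext_inner_right ℂ fun y => ?_
    set w := swapL H y with hw
    have hsw : swapL H w = y := swapL_swapL y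
    simp only [ContinuousLinearMap.sub_apply, ContinuousLinearMap.add_apply,
      ContinuousLinearMap.coe_comp', Function.comp_apply, inner_sub_left, inner_add_left]
    rw [← hsw]
    have e1 := star_identity C htrt hPt.2 hQt.2 (hfam.htrU t ht) (hfam.htrV t ht)
      (hfam.hF t ht) (hfam.hG t ht) hRt (hRtc.1 w) x
    have e2 := star_identity C htrt hPt.2 hQt.2 (hfam.htrU t ht) (hfam.htrV t ht)
      (hfam.hF t ht) (hfam.hG t ht) hRt (hRtc.1 w)
      (Vop (F s) (G s) (C.emb2 (Rs x)) - Vop (F t) (G t) (C.emb2 (Rs x)))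
    have e5 := green2 C htrt (hfam.hF t ht) (hfam.hG t ht) ζ (Rs x) (Rtc w)
    rw [(hRtc.1 w).2.2] at e5
    have e6 : C.Nmax (Rs x) + Vop (F t) (G t) (C.emb2 (Rs x)) - ζ • C.emb2 (Rs x)
        = x - (Vop (F s) (G s) (C.emb2 (Rs x)) - Vop (F t) (G t) (C.emb2 (Rs x))) := by
      rw [eq_sub_iff_add_eq]
      conv_rhs => rw [← (hRs.1 x).2.2]
      abel
    rw [e6] at e5
    -- memberships
    have hfP : tr s (c1 (Rs x)) ∈ Set.range (P s) := by
      rw [← hfam.htrU s hs]; exact Set.mem_image_of_mem _ (hRs.1 x).1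
    have hgP : tr t (c1 (Rtc w)) ∈ Set.range (P t) := by
      rw [← hfam.htrU t ht]; exact Set.mem_image_of_mem _ (hRtc.1 w).1
    have hfQ : tr s (c2 (Rs x)) ∈ Set.range (Q s) := by
      rw [← hfam.htrV s hs]; exact Set.mem_image_of_mem _ (hRs.1 x).2.1
    have hgQ : tr t (c2 (Rtc w)) ∈ Set.range (Q t) := by
      rw [← hfam.htrV t ht]; exact Set.mem_image_of_mem _ (hRtc.1 w).2.1
    rw [e1, e2, inner_swapL, inner_swapL, ContinuousLinearMap.adjoint_inner_left,
      ContinuousLinearMap.adjoint_inner_left, ContinuousLinearMap.coe_comp',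
      Function.comp_apply, inner_calJ,
      inner_sq ((pm ((P t - P s).comp (Jm 𝔥)) (-((Q t - Q s).comp (Jm 𝔥))))
        ((Top (tr s)) (Rs x))) ((Top (tr t)) (Rtc w))]
    simp only [pm_apply_c1, pm_apply_c2, ContinuousLinearMap.neg_apply, inner_neg_left,
      Top_c1, Top_c2, c1_sub, c2_sub]
    rw [proj_om hPt.1 hPs.1 hPs.2 hfP hgP, proj_om hQt.1 hQs.1 hQs.2 hfQ hgQ,
      om_sub_left, om_sub_left]
    simp only [inner_sub_left] at e5 ⊢
    linear_combination e5

end CSO
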